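/- Let G be a graph with a clique cutset K partitioning V(G) as (A, B, K) with A anticomplete to B, where either K = {k} is a single vertex with a neighbor in A, or no vertex of B is complete to K. If S is a strong stable set of G, then S ∩ (A ∪ K) is a strong stable set of the induced subgraph G[A ∪ K]. -/

import Mathlib

open SimpleGraph

section Defs

variable {V : Type*}

/-- A stable (independent) set of a graph. -/
def IsStable (G : SimpleGraph V) (S : Set V) : Prop :=
  ∀ ⦃u v : V⦄, u ∈ S → v ∈ S → ¬ G.Adj u v

/-- `C` is a maximal clique of the induced subgraph `G[W]`. -/
def IsMaxCliqueOn (G : SimpleGraph V) (W C : Set V) : Prop :=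
  C ⊆ W ∧ G.IsClique C ∧ ∀ D : Set V, D ⊆ W → G.IsClique D → C ⊆ D → D = C

/-- `C` is a maximal clique of `G`. -/
def IsMaxClique (G : SimpleGraph V) (C : Set V) : Prop :=
  G.IsClique C ∧ ∀ D : Set V, G.IsClique D → C ⊆ D → D = C

/-- `S` is a strong stable set of the induced subgraph `G[W]`. -/
def StrongStableOn (G : SimpleGraph V) (W S : Set V) : Prop :=
  S ⊆ W ∧ IsStable G S ∧ ∀ C : Set V, IsMaxCliqueOn G W C → C.Nonempty → (S ∩ C).Nonempty

/-- `S` is a strong stable set of `G`. -/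
def StrongStable (G : SimpleGraph V) (S : Set V) : Prop :=
  IsStable G S ∧ ∀ C : Set V, IsMaxClique G C → C.Nonempty → (S ∩ C).Nonempty

/-- The induced subgraph `G[W]` is strongly perfect. -/
def StronglyPerfectOn (G : SimpleGraph V) (W : Set V) : Prop :=
  ∀ U : Set V, U ⊆ W → ∃ S : Set V, StrongStableOn G U S

/-- `G` is strongly perfect: every induced subgraph has a strong stable set. -/
def StronglyPerfect (G : SimpleGraph V) : Prop :=
  ∀ U : Set V, ∃ S : Set V, StrongStableOn G U S

/-- `G` is minimal non-strongly-perfect. -/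
def MinimalNSP (G : SimpleGraph V) : Prop :=
  ¬ StronglyPerfect G ∧ ∀ W : Set V, W ≠ Set.univ → StronglyPerfectOn G W

end Defs

lemma exists_maxClique_ext {V : Type*} [Fintype V] (G : SimpleGraph V) (C : Set V)
    (hC : G.IsClique C) : ∃ D : Set V, C ⊆ D ∧ IsMaxClique G D := by
  classical
  have hfin : {D : Set V | G.IsClique D ∧ C ⊆ D}.Finite := Set.toFinite _
  obtain ⟨D, hD, hmax⟩ := hfin.exists_maximal ⟨C, hC, subset_rfl⟩
  refine ⟨D, hD.2, hD.1, fun E hE hDE => ?_⟩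
  exact Set.Subset.antisymm (hmax ⟨hE, hD.2.trans hDE⟩ hDE) hDE

theorem clique_cutset_strong_stable {V : Type*} [Fintype V] (G : SimpleGraph V)
    (A B K : Set V)
    (hUnion : A ∪ B ∪ K = Set.univ)
    (hAB : Disjoint A B) (hAK : Disjoint A K) (hBK : Disjoint B K)
    (hanti : ∀ a ∈ A, ∀ b ∈ B, ¬ G.Adj a b)
    (hA : A.Nonempty) (hB : B.Nonempty)
    (hK : G.IsClique K)
    (hside : (∃ k : V, K = {k} ∧ ∃ a ∈ A, G.Adj k a) ∨
      (∀ b ∈ B, ¬ ∀ x ∈ K, G.Adj b x))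
    (S : Set V) (hS : StrongStable G S) :
    StrongStableOn G (A ∪ K) (S ∩ (A ∪ K)) := by
  obtain ⟨hSst, hSmax⟩ := hS
  refine ⟨Set.inter_subset_right, fun u v hu hv => hSst hu.1 hv.1, ?_⟩
  intro C hC hCne
  obtain ⟨hCsub, hCcl, hCmaxOn⟩ := hC
  obtain ⟨D, hCD, hDcl, hDmax⟩ := exists_maxClique_ext G C hCcl
  -- no vertex of D lies in B
  have hDB : ∀ b ∈ D, b ∉ B := by
    intro b hbD hbB
    -- C ⊆ K
    have hCK : C ⊆ K := by
      intro c hcC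
      rcases hCsub hcC with hcA | hcK
      · exact absurd (hDcl (hCD hcC) hbD (fun h => hAB.ne_of_mem hcA hbB h))
          (hanti c hcA b hbB)
      · exact hcK
    rcases hside with ⟨k, hKk, a, haA, hka⟩ | hnc
    · -- C = {k}
      have hCk : C = {k} := by
        apply Set.eq_singleton_iff_nonempty_unique_mem.mpr
        exact ⟨hCne, fun x hx => by have := hCK hx; rwa [hKk] at this⟩
      have hkC : k ∈ C := by rw [hCk]; rfl
      have hpair : G.IsClique ({k, a} : Set V) := by
        rw [SimpleGraph.isClique_pair]
        exact fun _ => hka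
      have hsub : ({k, a} : Set V) ⊆ A ∪ K := by
        intro x hx
        rcases hx with rfl | rfl
        · exact Or.inr (by rw [hKk]; rfl)
        · exact Or.inl haA
      have := hCmaxOn {k, a} hsub hpair (by rw [hCk]; exact Set.singleton_subset_iff.mpr (Or.inl rfl))
      have haC : a ∈ C := by rw [← this]; exact Or.inr rfl
      have : a ∈ K := hCK haC
      exact hAK.ne_of_mem haA this rfl
    · -- C = K
      have hKC : K = C := hCmaxOn K Set.subset_union_right hK hCK
      refine hnc b hbB ?_
      intro x hxK
      have hxD : x ∈ D := hCD (hKC ▸ hxK)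
      exact hDcl hbD hxD (fun h => hBK.ne_of_mem hbB hxK h)
  have hDsub : D ⊆ A ∪ K := by
    intro x hxD
    have : x ∈ A ∪ B ∪ K := hUnion ▸ Set.mem_univ x
    rcases this with (hxA | hxB) | hxK
    · exact Or.inl hxA
    · exact absurd hxB (hDB x hxD)
    · exact Or.inr hxK
  have hDC : D = C := hCmaxOn D hDsub hDcl hCD
  have hCmaxG : IsMaxClique G C := by
    refine ⟨hCcl, fun E hE hCE => ?_⟩
    rw [← hDC]; exact hDmax E hE (hDC ▸ hCE)
  obtain ⟨s, hsS, hsC⟩ := hSmax C hCmaxG hCne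
  exact ⟨s, ⟨hsS, hCsub hsC⟩, hsC⟩
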